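/- Fix an integer n ≥ 2, γ > 0, a rate r > 0, and a survival function t ↦ ₜp_x : [0,∞) → (0,1] which is continuous, strictly decreasing, with ₀p_x = 1 and ₜp_x → 0 as t → ∞. Then for every t > 0, 1 − e^{−rt} < Δ_{n,γ}(t). In other words, the flat (historical) tontine with constant payout rate r, which is the limit of the optimal tontine as the risk aversion γ₁ → ∞, has strictly smaller cumulative discounted payout at every positive time than the optimal tontine for any finite risk aversion γ. -/

import Mathlib

open MeasureTheory Real Finset

/-- `theta n γ p = E[(n/N(p))^{1-γ}]` where `N(p)-1 ~ Bin(n-1,p)`. -/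
noncomputable def theta (n : ℕ) (γ p : ℝ) : ℝ :=
  ∑ k ∈ Finset.range n,
    ((n - 1).choose k : ℝ) * p ^ k * (1 - p) ^ (n - 1 - k) *
      ((n : ℝ) / ((k : ℝ) + 1)) ^ (1 - γ)

/-- `beta n γ p = p * theta n γ p`. -/
noncomputable def beta (n : ℕ) (γ p : ℝ) : ℝ := p * theta n γ p

/-- Optimal tontine payout function. -/
noncomputable def Dopt (n : ℕ) (γ r : ℝ) (p : ℝ → ℝ) (t : ℝ) : ℝ :=
  beta n γ (p t) ^ (1 / γ) /
    ∫ s in Set.Ioi (0 : ℝ), Real.exp (-r * s) * beta n γ (p s) ^ (1 / γ)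

/-- Cumulative discounted payout of the optimal tontine. -/
noncomputable def Delta (n : ℕ) (γ r : ℝ) (p : ℝ → ℝ) (t : ℝ) : ℝ :=
  ∫ s in (0 : ℝ)..t, Real.exp (-r * s) * Dopt n γ r p s

noncomputable def aco (n : ℕ) (γ : ℝ) (k : ℕ) : ℝ :=
  ((n - 1).choose k : ℝ) * ((n : ℝ) / ((k : ℝ) + 1)) ^ (1 - γ)

noncomputable def Fb (n : ℕ) (γ : ℝ) (p : ℝ) : ℝ :=
  ∑ k ∈ Finset.range n, aco n γ k * (p ^ (k + 1) * (1 - p) ^ (n - 1 - k))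

theorem beta_eq_Fb (n : ℕ) (γ p : ℝ) : beta n γ p = Fb n γ p := by
  unfold beta theta Fb aco
  rw [Finset.mul_sum]
  exact Finset.sum_congr rfl fun k _ => by ring

theorem Fb_continuous (n : ℕ) (γ : ℝ) : Continuous (Fb n γ) := by
  unfold Fb
  exact continuous_finset_sum _ fun k _ => by fun_prop

theorem hasDerivAt_Fb (n : ℕ) (γ : ℝ) (x : ℝ) :
    HasDerivAt (Fb n γ)
      (∑ k ∈ Finset.range n, aco n γ k *
        ((((k : ℝ) + 1) * x ^ k) * (1 - x) ^ (n - 1 - k)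
          + x ^ (k + 1) * (((n - 1 - k : ℕ) : ℝ) * (1 - x) ^ (n - 1 - k - 1) * (-1)))) x := by
  apply HasDerivAt.fun_sum
  intro k _
  apply HasDerivAt.const_mul
  have h1 : HasDerivAt (fun p : ℝ => p ^ (k + 1)) (((k : ℝ) + 1) * x ^ k) x := by
    simpa using hasDerivAt_pow (k + 1) x
  have h2 : HasDerivAt (fun p : ℝ => (1 - p) ^ (n - 1 - k))
      (((n - 1 - k : ℕ) : ℝ) * (1 - x) ^ (n - 1 - k - 1) * (-1)) x :=
    (hasDerivAt_pow (n - 1 - k) (1 - x)).comp x ((hasDerivAt_id x).const_sub 1)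
  exact h1.mul h2

theorem key_rpow (γ N x y : ℝ) (hγ : 0 < γ) (hN : 0 < N) (hx : 0 < x) (hxy : x ≤ y) :
    x * (N / x) ^ (1 - γ) ≤ y * (N / y) ^ (1 - γ) := by
  have hy : 0 < y := lt_of_lt_of_le hx hxy
  have hrw : ∀ z : ℝ, 0 < z → z * (N / z) ^ (1 - γ) = N ^ (1 - γ) * z ^ γ := by
    intro z hz
    rw [Real.div_rpow hN.le hz.le]
    have : z ^ γ = z / z ^ (1 - γ) := by
      rw [eq_div_iff (by positivity), ← Real.rpow_add hz]
      norm_num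
    rw [this]; ring
  rw [hrw x hx, hrw y hy]
  exact mul_le_mul_of_nonneg_left (Real.rpow_le_rpow hx.le hxy hγ.le) (by positivity)

theorem aco_pos (n : ℕ) (γ : ℝ) (hn : 1 ≤ n) (k : ℕ) (hk : k ≤ n - 1) : 0 < aco n γ k := by
  unfold aco
  have h1 : 0 < ((n - 1).choose k : ℝ) := by exact_mod_cast Nat.choose_pos hk
  have h2 : (0:ℝ) < (n : ℝ) / ((k : ℝ) + 1) := by
    apply div_pos _ (by positivity)
    exact_mod_cast Nat.lt_of_lt_of_le Nat.zero_lt_one hn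
  exact mul_pos h1 (Real.rpow_pos_of_pos h2 _)

theorem deriv_Fb_pos (n : ℕ) (hn : 2 ≤ n) (γ : ℝ) (hγ : 0 < γ) (x : ℝ)
    (hx : x ∈ Set.Ioo (0:ℝ) 1) :
    0 < ∑ k ∈ Finset.range n, aco n γ k *
        ((((k : ℝ) + 1) * x ^ k) * (1 - x) ^ (n - 1 - k)
          + x ^ (k + 1) * (((n - 1 - k : ℕ) : ℝ) * (1 - x) ^ (n - 1 - k - 1) * (-1))) := by
  obtain ⟨hx0, hx1⟩ := hx
  have hx1' : (0:ℝ) < 1 - x := by linarith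
  obtain ⟨m, rfl⟩ : ∃ m, n = m + 1 := ⟨n - 1, by omega⟩
  have hm : 1 ≤ m := by omega
  simp only [Nat.add_sub_cancel]
  set u : ℕ → ℝ := fun k => aco (m+1) γ k * (((k:ℝ) + 1) * (x ^ k * (1 - x) ^ (m - k))) with hu
  set v : ℕ → ℝ := fun k =>
    aco (m+1) γ k * (((m - k : ℕ) : ℝ) * (x ^ (k + 1) * (1 - x) ^ (m - k - 1))) with hv
  have hsum : ∀ k ∈ Finset.range (m+1),
      aco (m+1) γ k * ((((k : ℝ) + 1) * x ^ k) * (1 - x) ^ (m - k)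
        + x ^ (k + 1) * (((m - k : ℕ) : ℝ) * (1 - x) ^ (m - k - 1) * (-1))) = u k - v k :=
    fun k _ => by simp only [hu, hv]; ring
  rw [Finset.sum_congr rfl hsum, Finset.sum_sub_distrib, Finset.sum_range_succ' u m,
    Finset.sum_range_succ v m]
  have hvm : v m = 0 := by simp [hv]
  have hle : ∑ k ∈ Finset.range m, v k ≤ ∑ k ∈ Finset.range m, u (k+1) := by
    apply Finset.sum_le_sum
    intro k hk
    have hnat : (m.choose k : ℝ) * ((m - k : ℕ) : ℝ) = (m.choose (k+1) : ℝ) * ((k : ℝ) + 1) := by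
      exact_mod_cast (Nat.choose_succ_right_eq m k).symm
    have hcoef : aco (m+1) γ k * ((m - k : ℕ) : ℝ) ≤ aco (m+1) γ (k+1) * (((k:ℝ) + 1) + 1) := by
      unfold aco
      simp only [Nat.add_sub_cancel, Nat.cast_add, Nat.cast_one]
      have hkey := key_rpow γ ((m:ℝ)+1) ((k:ℝ)+1) ((k:ℝ)+1+1) hγ (by positivity)
        (by positivity) (by linarith)
      calc (m.choose k : ℝ) * (((m:ℝ)+1) / ((k:ℝ)+1)) ^ (1-γ) * ((m - k : ℕ) : ℝ)
          = (m.choose (k+1) : ℝ) * (((k:ℝ)+1) * ((((m:ℝ)+1) / ((k:ℝ)+1)) ^ (1-γ))) := by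
            rw [mul_right_comm, hnat]; ring
        _ ≤ (m.choose (k+1) : ℝ) * ((((k:ℝ)+1)+1) * ((((m:ℝ)+1) / (((k:ℝ)+1)+1)) ^ (1-γ))) := by
            exact mul_le_mul_of_nonneg_left hkey (by positivity)
        _ = (m.choose (k+1) : ℝ) * ((((m:ℝ)+1) / (((k:ℝ)+1)+1)) ^ (1-γ)) * (((k:ℝ)+1)+1) := by
            ring
    simp only [hu, hv]
    calc aco (m+1) γ k * (((m - k : ℕ) : ℝ) * (x ^ (k + 1) * (1 - x) ^ (m - k - 1)))
        = (aco (m+1) γ k * ((m - k : ℕ) : ℝ)) * (x ^ (k + 1) * (1 - x) ^ (m - k - 1)) := by ring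
      _ ≤ (aco (m+1) γ (k+1) * (((k:ℝ)+1)+1)) * (x ^ (k + 1) * (1 - x) ^ (m - k - 1)) :=
          mul_le_mul_of_nonneg_right hcoef (by positivity)
      _ = aco (m+1) γ (k+1) * ((((k+1:ℕ):ℝ)+1) * (x ^ (k + 1) * (1 - x) ^ (m - (k+1)))) := by
          rw [← Nat.sub_sub]; push_cast; ring
  have hu0 : 0 < u 0 := by
    have ha := aco_pos (m+1) γ (by omega) 0 (by omega)
    simp only [hu]
    exact mul_pos ha (by positivity)
  linarith

theorem core_ineq (f : ℝ → ℝ) (r : ℝ) (hr : 0 < r) (hfcont : Continuous f)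
    (hfpos : ∀ s, 0 ≤ s → 0 < f s)
    (hfanti : ∀ s1 s2, 0 ≤ s1 → s1 < s2 → f s2 < f s1)
    (t : ℝ) (ht : 0 < t) :
    (1 - Real.exp (-r*t)) * (∫ s in Set.Ioi (0:ℝ), Real.exp (-r*s) * f s)
      < (∫ s in (0:ℝ)..t, Real.exp (-r*s) * f s)
    ∧ 0 < ∫ s in Set.Ioi (0:ℝ), Real.exp (-r*s) * f s := by
  set g : ℝ → ℝ := fun s => Real.exp (-r * s) * f s with hg
  have hgcont : Continuous g := (Continuous.rexp (by fun_prop)).mul hfcont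
  have hfle : ∀ s, 0 ≤ s → f s ≤ f 0 := by
    intro s hs
    rcases eq_or_lt_of_le hs with h | h
    · rw [← h]
    · exact (hfanti 0 s le_rfl h).le
  have hgint : IntegrableOn g (Set.Ioi (0:ℝ)) := by
    apply Integrable.mono' ((exp_neg_integrableOn_Ioi 0 hr).const_mul (f 0))
    · exact hgcont.aestronglyMeasurable.restrict
    · rw [ae_restrict_iff' measurableSet_Ioi]
      filter_upwards with s hs
      rw [Real.norm_eq_abs, abs_of_nonneg (mul_nonneg (Real.exp_nonneg _) (hfpos s hs.le).le)]
      calc Real.exp (-r*s) * f s ≤ Real.exp (-r*s) * f 0 :=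
            mul_le_mul_of_nonneg_left (hfle s hs.le) (Real.exp_nonneg _)
        _ = f 0 * Real.exp (-r*s) := mul_comm _ _
  have hexpderiv : ∀ s : ℝ, HasDerivAt (fun u => -Real.exp (-r*u)/r) (Real.exp (-r*s)) s := by
    intro s
    have h0 : HasDerivAt (fun u : ℝ => -r*u) (-r) s := by
      simpa using (hasDerivAt_id s).const_mul (-r)
    have h1 : HasDerivAt (fun u : ℝ => Real.exp (-r*u)) (Real.exp (-r*s) * (-r)) s :=
      HasDerivAt.exp h0
    have h2 := (h1.div_const r).neg
    have h3 : -(Real.exp (-r*s) * (-r) / r) = Real.exp (-r*s) := by field_simp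
    rw [h3] at h2
    refine h2.congr_of_eventuallyEq (Filter.Eventually.of_forall fun u => ?_)
    simp [neg_div]
  set Et := Real.exp (-r * t) with hEt
  have hEtpos : 0 < Et := Real.exp_pos _
  have hEt1 : Et < 1 := by
    rw [hEt]; apply Real.exp_lt_one_iff.mpr; nlinarith
  have hA' : ∫ s in (0:ℝ)..t, Real.exp (-r*s) = (1 - Et)/r := by
    rw [intervalIntegral.integral_eq_sub_of_hasDerivAt (fun s _ => hexpderiv s)
      (Continuous.intervalIntegrable (by fun_prop) 0 t)]
    rw [hEt]
    field_simp
    simp only [mul_zero, neg_zero, Real.exp_zero]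
    ring
  have hB' : ∫ s in Set.Ioi t, Real.exp (-r*s) = Et/r := by
    have htend : Filter.Tendsto (fun u => -Real.exp (-r*u)/r) Filter.atTop (nhds 0) := by
      have h2 : Filter.Tendsto (fun u : ℝ => -r * u) Filter.atTop Filter.atBot :=
        (Filter.tendsto_const_mul_atBot_of_neg (by linarith)).mpr Filter.tendsto_id
      have h1 : Filter.Tendsto (fun u : ℝ => Real.exp (-r*u)) Filter.atTop (nhds 0) := by
        exact Real.tendsto_exp_atBot.comp h2
      have := (h1.div_const r).neg
      simpa [neg_div] using this
    rw [integral_Ioi_of_hasDerivAt_of_tendsto ((hexpderiv t).continuousAt.continuousWithinAt)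
      (fun s _ => hexpderiv s) (exp_neg_integrableOn_Ioi t hr) htend]
    rw [hEt]
    field_simp
    ring
  set A := ∫ s in (0:ℝ)..t, g s with hA
  set B := ∫ s in Set.Ioi t, g s with hB
  have hsplit : (∫ s in Set.Ioi (0:ℝ), g s) = A + B := by
    rw [hA, intervalIntegral.integral_of_le ht.le, hB]
    rw [← MeasureTheory.setIntegral_union (Set.Ioc_disjoint_Ioi le_rfl) measurableSet_Ioi
      (hgint.mono_set Set.Ioc_subset_Ioi_self) (hgint.mono_set (Set.Ioi_subset_Ioi ht.le))]
    rw [Set.Ioc_union_Ioi_eq_Ioi ht.le]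
  have hft : 0 < f t := hfpos t ht.le
  -- lower bound for A
  have hAgt : f t * ((1 - Et)/r) < A := by
    have hpos : 0 < ∫ s in (0:ℝ)..t, Real.exp (-r*s) * (f s - f t) := by
      apply intervalIntegral.intervalIntegral_pos_of_pos_on
      · exact Continuous.intervalIntegrable (by fun_prop) 0 t
      · intro s hs
        have h1 : f t < f s := hfanti s t hs.1.le hs.2
        have h2 := Real.exp_pos (-r*s)
        nlinarith
      · exact ht
    have heq : (∫ s in (0:ℝ)..t, Real.exp (-r*s) * (f s - f t))
        = A - f t * ((1 - Et)/r) := by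
      have hfun : (fun s => Real.exp (-r*s) * (f s - f t))
          = fun s => g s - f t * Real.exp (-r*s) := by
        funext s; rw [hg]; ring
      rw [hfun, intervalIntegral.integral_sub (hgcont.intervalIntegrable 0 t)
        ((Continuous.intervalIntegrable (by fun_prop) 0 t)),
        intervalIntegral.integral_const_mul, hA', hA]
    linarith
  -- upper bound for B
  have hBle : B ≤ f t * (Et/r) := by
    have h1 : B ≤ ∫ s in Set.Ioi t, f t * Real.exp (-r*s) := by
      apply MeasureTheory.setIntegral_mono_on (hgint.mono_set (Set.Ioi_subset_Ioi ht.le))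
        ((exp_neg_integrableOn_Ioi t hr).const_mul (f t)) measurableSet_Ioi
      intro s hs
      have hs' : t < s := hs
      calc g s = Real.exp (-r*s) * f s := by rw [hg]
        _ ≤ Real.exp (-r*s) * f t :=
            mul_le_mul_of_nonneg_left (hfanti t s ht.le hs').le (Real.exp_nonneg _)
        _ = f t * Real.exp (-r*s) := mul_comm _ _
    rwa [MeasureTheory.integral_const_mul, hB'] at h1
  have hBnonneg : 0 ≤ B := by
    rw [hB]
    apply MeasureTheory.setIntegral_nonneg measurableSet_Ioi
    intro s hs
    exact mul_nonneg (Real.exp_nonneg _) (hfpos s (le_trans ht.le (le_of_lt hs))).le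
  have hApos : 0 < A := by
    have : 0 < f t * ((1 - Et)/r) := mul_pos hft (div_pos (by linarith) hr)
    linarith
  constructor
  · rw [hsplit]
    have key : (1 - Et) * B < Et * A := by
      calc (1 - Et) * B ≤ (1 - Et) * (f t * (Et/r)) :=
            mul_le_mul_of_nonneg_left hBle (by linarith)
        _ = Et * (f t * ((1 - Et)/r)) := by ring
        _ < Et * A := by exact mul_lt_mul_of_pos_left hAgt hEtpos
    nlinarith
  · rw [hsplit]; linarith

theorem beta_strictMonoOn (n : ℕ) (hn : 2 ≤ n) (γ : ℝ) (hγ : 0 < γ) :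
    StrictMonoOn (beta n γ) (Set.Icc 0 1) := by
  have hF : StrictMonoOn (Fb n γ) (Set.Icc 0 1) := by
    apply strictMonoOn_of_deriv_pos (convex_Icc 0 1) (Fb_continuous n γ).continuousOn
    intro x hx
    rw [interior_Icc] at hx
    rw [(hasDerivAt_Fb n γ x).deriv]
    exact deriv_Fb_pos n hn γ hγ x hx
  intro a ha b hb hab
  rw [beta_eq_Fb, beta_eq_Fb]
  exact hF ha hb hab

/-- the flat tontine (payout rate `r`, the `γ → ∞` limit of the optimal
tontine) has strictly smaller cumulative discounted payout at every positive time than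
the optimal tontine for any finite risk aversion `γ`:  `1 - e^{-rt} < Δ_{n,γ}(t)`. -/
theorem flat_tontine_depletes_slower
    (n : ℕ) (hn : 2 ≤ n) (γ : ℝ) (hγ : 0 < γ)
    (r : ℝ) (hr : 0 < r)
    (p : ℝ → ℝ) (hcont : Continuous p) (hanti : StrictAntiOn p (Set.Ici 0))
    (hmem : ∀ t, 0 ≤ t → p t ∈ Set.Ioc (0 : ℝ) 1) (hp0 : p 0 = 1)
    (hlim : Filter.Tendsto p Filter.atTop (nhds 0)) :
    ∀ t > 0, 1 - Real.exp (-r * t) < Delta n γ r p t := by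
  intro t ht
  have hγ' : 0 < 1/γ := by positivity
  have hβmono := beta_strictMonoOn n hn γ hγ
  have hβ0 : beta n γ 0 = 0 := by simp [beta]
  have hβpos : ∀ q ∈ Set.Ioc (0:ℝ) 1, 0 < beta n γ q := by
    intro q hq
    have := hβmono (Set.left_mem_Icc.mpr zero_le_one) ⟨hq.1.le, hq.2⟩ hq.1
    rwa [hβ0] at this
  have hfpos : ∀ s, 0 ≤ s → 0 < beta n γ (p s) ^ (1/γ) := fun s hs =>
    Real.rpow_pos_of_pos (hβpos _ (hmem s hs)) _
  have hfanti : ∀ s1 s2, 0 ≤ s1 → s1 < s2 →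
      beta n γ (p s2) ^ (1/γ) < beta n γ (p s1) ^ (1/γ) := by
    intro s1 s2 h1 h2
    have h2' : 0 ≤ s2 := le_trans h1 h2.le
    have hp1 := hmem s1 h1
    have hp2 := hmem s2 h2'
    have hlt : p s2 < p s1 := hanti h1 h2' h2
    have hb : beta n γ (p s2) < beta n γ (p s1) :=
      hβmono ⟨hp2.1.le, hp2.2⟩ ⟨hp1.1.le, hp1.2⟩ hlt
    exact Real.rpow_lt_rpow (hβpos _ hp2).le hb hγ'
  have hβcont : Continuous (beta n γ) := by
    have he : beta n γ = Fb n γ := funext (beta_eq_Fb n γ)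
    rw [he]; exact Fb_continuous n γ
  have hfcont : Continuous (fun s => beta n γ (p s) ^ (1/γ)) :=
    Continuous.rpow_const (hβcont.comp hcont) (fun s => Or.inr hγ'.le)
  obtain ⟨hkey, hIpos⟩ :=
    core_ineq (fun s => beta n γ (p s) ^ (1/γ)) r hr hfcont hfpos hfanti t ht
  have hDelta : Delta n γ r p t
      = (∫ s in (0:ℝ)..t, Real.exp (-r*s) * (beta n γ (p s) ^ (1/γ))) /
        (∫ s in Set.Ioi (0:ℝ), Real.exp (-r*s) * (beta n γ (p s) ^ (1/γ))) := by
    unfold Delta Dopt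
    rw [← intervalIntegral.integral_div]
    apply intervalIntegral.integral_congr
    intro s _
    dsimp only
    rw [mul_div_assoc]
  rw [hDelta, lt_div_iff₀ hIpos]
  exact hkey
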